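/- Let q ≥ t ≥ 2 with q a prime power. The number of projective lines through the point P = ⟨(1,1)⟩_{F_q} that are entirely contained in the set Q = {⟨(a,b)⟩_{F_q} : a, b ∈ F_{q^t}^*, N(a) = N(b)} ⊆ PG(2t−1, q) equals (∑_{y ∈ F_{q^t} \ F_q} [F_q(y) : F_q]) / (q(q−1)). -/

import Mathlib

open Polynomial

section Aux

variable {F K : Type*} [Field F] [Field K] [Algebra F K] [Fintype F] [Fintype K]

private theorem aux_norm_conj (σ : K ≃ₐ[F] K) (x : K) :
    Algebra.norm F (σ x) = Algebra.norm F x := by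
  haveI : FiniteDimensional F K := Module.Finite.of_finite
  apply (algebraMap F K).injective
  rw [Algebra.norm_eq_prod_automorphisms, Algebra.norm_eq_prod_automorphisms]
  exact Fintype.prod_bijective (· * σ) (Group.mulRight_bijective σ) _ _ (fun τ => rfl)

private theorem aux_not_range_conj {y : K} (hy : y ∉ Set.range (algebraMap F K))
    (σ : K ≃ₐ[F] K) : σ y ∉ Set.range (algebraMap F K) := by
  rintro ⟨a, ha⟩
  exact hy ⟨a, by have := congrArg σ.symm ha; simpa using this⟩

private theorem aux_keyB (q t : ℕ) (hqt : t ≤ q) (hF : Fintype.card F = q)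
    (hcardGal : Fintype.card (K ≃ₐ[F] K) = t)
    (W : Submodule F (K × K))
    (h11 : ((1 : K), (1 : K)) ∈ W)
    (hW : ∀ v ∈ W, v ≠ 0 → v.1 ≠ 0 ∧ v.2 ≠ 0 ∧ Algebra.norm F v.1 = Algebra.norm F v.2)
    (y w : K) (hmem : (y, w) ∈ W) (hy : y ∉ Set.range (algebraMap F K)) :
    ∃ σ : K ≃ₐ[F] K, σ y = w := by
  classical
  haveI : FiniteDimensional F K := Module.Finite.of_finite
  set Py : Polynomial K := ∏ σ : K ≃ₐ[F] K, (X - C (σ y)) with hPydef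
  set Pw : Polynomial K := ∏ σ : K ≃ₐ[F] K, (X - C (σ w)) with hPwdef
  have hmony : Py.Monic := monic_prod_of_monic _ _ (fun σ _ => monic_X_sub_C _)
  have hmonw : Pw.Monic := monic_prod_of_monic _ _ (fun σ _ => monic_X_sub_C _)
  have hdegy : Py.natDegree = t := by
    rw [hPydef, natDegree_prod_of_monic _ _ (fun σ _ => monic_X_sub_C _)]
    simp [hcardGal]
  have hdegw : Pw.natDegree = t := by
    rw [hPwdef, natDegree_prod_of_monic _ _ (fun σ _ => monic_X_sub_C _)]
    simp [hcardGal]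
  have hPyPw : Py = Pw := by
    by_contra hne
    have hp0 : Py - Pw ≠ 0 := sub_ne_zero.2 hne
    have hdeg : (Py - Pw).natDegree < t := by
      have hd : (Py - Pw).degree < Py.degree := by
        apply degree_sub_lt ?_ hmony.ne_zero ?_
        · rw [degree_eq_natDegree hmony.ne_zero, degree_eq_natDegree hmonw.ne_zero, hdegy, hdegw]
        · rw [hmony.leadingCoeff, hmonw.leadingCoeff]
      exact hdegy ▸ natDegree_lt_natDegree hp0 hd
    have heval : ∀ a : F, (Py - Pw).eval (algebraMap F K a) = 0 := by
      intro a
      have hvW : ((algebraMap F K a - y, algebraMap F K a - w) : K × K) ∈ W := by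
        have h1 := W.sub_mem (W.smul_mem a h11) hmem
        convert h1 using 1
        simp [Prod.ext_iff, Algebra.smul_def]
      have hvne : ((algebraMap F K a - y, algebraMap F K a - w) : K × K) ≠ 0 := by
        intro h
        apply hy
        exact ⟨a, by simpa [Prod.ext_iff, sub_eq_zero] using congrArg Prod.fst h⟩
      obtain ⟨-, -, hnorm⟩ := hW _ hvW hvne
      have h2 := congrArg (algebraMap F K) hnorm
      rw [Algebra.norm_eq_prod_automorphisms, Algebra.norm_eq_prod_automorphisms] at h2
      simp only [map_sub, AlgEquiv.commutes] at h2
      simp only [eval_sub, hPydef, hPwdef, eval_prod, eval_sub, eval_X, eval_C]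
      rw [sub_eq_zero]
      exact h2
    have := eq_zero_of_natDegree_lt_card_of_eval_eq_zero (Py - Pw)
      (algebraMap F K).injective heval (by rw [hF]; omega)
    exact hp0 this
  have hz : Py.eval w = 0 := by
    rw [hPyPw, hPwdef, eval_prod]
    exact Finset.prod_eq_zero (Finset.mem_univ (1 : K ≃ₐ[F] K)) (by simp)
  rw [hPydef, eval_prod] at hz
  obtain ⟨σ, -, hσ⟩ := Finset.prod_eq_zero_iff.1 hz
  refine ⟨σ, ?_⟩
  simp only [eval_sub, eval_X, eval_C, sub_eq_zero] at hσ
  exact hσ.symm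

private theorem aux_indep_pair {y : K} (hy : y ∉ Set.range (algebraMap F K)) (w : K) :
    LinearIndependent F ![((1 : K), (1 : K)), (y, w)] := by
  rw [LinearIndependent.pair_iff]
  intro s r hsr
  have h1 : algebraMap F K s + algebraMap F K r * y = 0 := by
    have := congrArg Prod.fst hsr
    simpa [Algebra.smul_def] using this
  have hr : r = 0 := by
    by_contra hr0
    apply hy
    refine ⟨-s / r, ?_⟩
    have hrK : algebraMap F K r ≠ 0 := by
      simpa using (map_ne_zero (algebraMap F K)).2 hr0
    rw [map_div₀, map_neg, div_eq_iff hrK]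
    linear_combination (norm := ring_nf) -h1
  subst hr
  simp only [map_zero, zero_mul, add_zero] at h1
  exact ⟨by simpa using (_root_.map_eq_zero (algebraMap F K)).1 h1, rfl⟩

private theorem aux_finrank_span_pair {y : K} (hy : y ∉ Set.range (algebraMap F K)) (w : K) :
    Module.finrank F (Submodule.span F {((1 : K), (1 : K)), (y, w)}) = 2 := by
  have h := finrank_span_eq_card (R := F) (aux_indep_pair hy w)
  have hr : Set.range ![((1 : K), (1 : K)), (y, w)] = {((1 : K), (1 : K)), (y, w)} := by
    simp only [Matrix.range_cons, Matrix.range_empty, Set.union_empty,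
      Set.union_singleton]
    rw [Set.pair_comm]
  rw [hr] at h
  rw [h]
  simp

private theorem aux_spanL {y : K} (hy : y ∉ Set.range (algebraMap F K)) (σ : K ≃ₐ[F] K) :
    ∀ v ∈ Submodule.span F {((1 : K), (1 : K)), (y, σ y)}, v ≠ 0 →
      v.1 ≠ 0 ∧ v.2 ≠ 0 ∧ Algebra.norm F v.1 = Algebra.norm F v.2 := by
  intro v hv hvne
  obtain ⟨s, r, hsr⟩ := Submodule.mem_span_pair.1 hv
  have h1 : v.1 = algebraMap F K s + algebraMap F K r * y := by
    have := congrArg Prod.fst hsr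
    simpa [Algebra.smul_def] using this.symm
  have h2 : v.2 = σ v.1 := by
    have := congrArg Prod.snd hsr
    rw [h1]
    simp only [Prod.snd_add, Prod.smul_snd] at this
    rw [← this]
    simp [Algebra.smul_def, map_add, map_mul, AlgEquiv.commutes]
  have hv1 : v.1 ≠ 0 := by
    intro h0
    apply hvne
    have : v.2 = 0 := by rw [h2, h0, map_zero]
    exact Prod.ext h0 this
  exact ⟨hv1, by rw [h2]; simpa using hv1, by rw [h2, aux_norm_conj]⟩

open scoped Classical in
private theorem aux_orbit_card (y : K) :
    (Finset.univ.image fun σ : K ≃ₐ[F] K => σ y).card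
      = Module.finrank F (Algebra.adjoin F ({y} : Set K)) := by
  haveI : FiniteDimensional F K := Module.Finite.of_finite
  have hint : IsIntegral F y := IsIntegral.of_finite F y
  set m : Polynomial F := minpoly F y with hm
  have hm0 : m ≠ 0 := minpoly.ne_zero hint
  have hsep : m.Separable := Algebra.IsSeparable.isSeparable F y
  have hsplit : Splits (m.map (algebraMap F K)) := Normal.splits inferInstance y
  have horb : (Finset.univ.image fun σ : K ≃ₐ[F] K => σ y)
      = (m.map (algebraMap F K)).roots.toFinset := by
    ext w
    simp only [Finset.mem_image, Finset.mem_univ, true_and, Multiset.mem_toFinset]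
    rw [mem_roots_map_of_injective (algebraMap F K).injective hm0, ← Polynomial.aeval_def]
    constructor
    · rintro ⟨σ, rfl⟩
      rw [show (Polynomial.aeval (σ y)) m = σ ((Polynomial.aeval y) m) from
        (Polynomial.aeval_algHom_apply (σ : K →ₐ[F] K) y m)]
      rw [minpoly.aeval]
      simp
    · intro hw
      obtain ⟨σ, hσ⟩ := minpoly.exists_algEquiv_of_root' (Algebra.IsAlgebraic.isAlgebraic y) hw
      exact ⟨σ, hσ⟩
  rw [horb]
  have hnodup : (m.map (algebraMap F K)).roots.Nodup :=
    Polynomial.nodup_roots (hsep.map (f := algebraMap F K))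
  rw [Multiset.toFinset_card_of_nodup hnodup]
  have hcard : Multiset.card (m.map (algebraMap F K)).roots = m.natDegree :=
    by rw [← natDegree_map (algebraMap F K)]; exact hsplit.natDegree_eq_card_roots.symm
  rw [hcard]
  have h1 : Module.finrank F (IntermediateField.adjoin F ({y} : Set K)) = m.natDegree :=
    IntermediateField.adjoin.finrank hint
  have h2 := IntermediateField.adjoin_simple_toSubalgebra_of_isAlgebraic (F := F) hint.isAlgebraic
  rw [← h1]
  have h3 : Module.finrank F (IntermediateField.adjoin F ({y} : Set K)).toSubalgebra
      = Module.finrank F (IntermediateField.adjoin F ({y} : Set K)) := rfl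
  rw [← h3]
  exact (Subalgebra.equivOfEq _ _ h2).toLinearEquiv.finrank_eq

end Aux

open scoped Classical in
theorem stmt11 (q t : ℕ) (hq : IsPrimePow q) (ht : 2 ≤ t) (hqt : t ≤ q)
    (F K : Type*) [Field F] [Field K] [Algebra F K] [Fintype F] [Fintype K]
    (hF : Fintype.card F = q) (hK : Fintype.card K = q ^ t) :
    Set.ncard {W : Submodule F (K × K) | Module.finrank F W = 2 ∧ ((1 : K), (1 : K)) ∈ W ∧
        ∀ v ∈ W, v ≠ 0 →
          v.1 ≠ 0 ∧ v.2 ≠ 0 ∧ Algebra.norm F v.1 = Algebra.norm F v.2} =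
      (∑ y ∈ Finset.univ.filter (fun y : K => y ∉ Set.range (algebraMap F K)),
        Module.finrank F (Algebra.adjoin F ({y} : Set K))) / (q * (q - 1)) := by
  classical
  haveI : FiniteDimensional F K := Module.Finite.of_finite
  have hq2 : 2 ≤ q := le_trans ht hqt
  have hrank : Module.finrank F K = t := by
    have h := Module.card_eq_pow_finrank (K := F) (V := K)
    rw [hF, hK] at h
    exact Nat.pow_right_injective hq2 h.symm
  have hcardGal : Fintype.card (K ≃ₐ[F] K) = t := by
    rw [← Nat.card_eq_fintype_card, IsGalois.card_aut_eq_finrank, hrank]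
  haveI : Finite (Submodule F (K × K)) :=
    Finite.of_injective (fun W : Submodule F (K × K) => (W : Set (K × K)))
      SetLike.coe_injective
  set L : Set (Submodule F (K × K)) :=
    {W : Submodule F (K × K) | Module.finrank F W = 2 ∧ ((1 : K), (1 : K)) ∈ W ∧
        ∀ v ∈ W, v ≠ 0 →
          v.1 ≠ 0 ∧ v.2 ≠ 0 ∧ Algebra.norm F v.1 = Algebra.norm F v.2} with hLdef
  have hLfin : L.Finite := Set.toFinite L
  set Lfin : Finset (Submodule F (K × K)) := hLfin.toFinset with hLfindef
  set SS : Finset (K × K) := Finset.univ.filter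
    (fun yw : K × K => yw.1 ∉ Set.range (algebraMap F K) ∧ ∃ σ : K ≃ₐ[F] K, σ yw.1 = yw.2)
    with hSSdef
  set Φ : K × K → Submodule F (K × K) :=
    fun yw => Submodule.span F {((1 : K), (1 : K)), yw} with hΦdef
  -- A : Φ maps SS into Lfin
  have hA : ∀ yw ∈ SS, Φ yw ∈ Lfin := by
    rintro ⟨y, w⟩ hyw
    rw [hSSdef, Finset.mem_filter] at hyw
    obtain ⟨-, hy, σ, hσ⟩ := hyw
    rw [hLfindef, Set.Finite.mem_toFinset]
    simp only at hy hσ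
    subst hσ
    exact ⟨aux_finrank_span_pair hy _, Submodule.subset_span (Set.mem_insert _ _),
      aux_spanL hy σ⟩
  -- B : each fiber has q^2 - q elements
  have hB : ∀ W ∈ Lfin, (SS.filter (fun yw => Φ yw = W)).card = q ^ 2 - q := by
    intro W hWfin
    rw [hLfindef, Set.Finite.mem_toFinset] at hWfin
    obtain ⟨hW2, hW11, hWall⟩ := hWfin
    set U : Submodule F K := W.map (LinearMap.fst F K K) with hUdef
    have hWinj : ∀ v ∈ W, v.1 = (0 : K) → v = 0 := by
      intro v hv h1
      by_contra hne
      exact (hWall v hv hne).1 h1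
    have hφinj : Function.Injective ((LinearMap.fst F K K) ∘ₗ W.subtype) := by
      intro a b hab
      apply Subtype.ext
      have hsub : ((a : K × K) - (b : K × K)) ∈ W := W.sub_mem a.2 b.2
      have h1 : ((a : K × K) - (b : K × K)).1 = 0 := by
        simpa [sub_eq_zero] using hab
      have := hWinj _ hsub h1
      rwa [sub_eq_zero] at this
    have hUrange : LinearMap.range ((LinearMap.fst F K K) ∘ₗ W.subtype) = U := by
      rw [LinearMap.range_comp, Submodule.range_subtype]
    have hUrank : Module.finrank F U = 2 := by
      rw [← hUrange, LinearMap.finrank_range_of_inj hφinj, hW2]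
    have hUcard : Fintype.card U = q ^ 2 := by
      rw [Module.card_eq_pow_finrank (K := F) (V := U), hF, hUrank]
    have hrangesub : ∀ a : F, algebraMap F K a ∈ U := by
      intro a
      refine ⟨(algebraMap F K a, algebraMap F K a), ?_, rfl⟩
      have := W.smul_mem a hW11
      convert this using 1
      simp [Prod.ext_iff, Algebra.smul_def]
    have hbij : (SS.filter (fun yw => Φ yw = W)).card
        = (Finset.univ.filter
            (fun y : K => y ∈ U ∧ y ∉ Set.range (algebraMap F K))).card := by
      apply Finset.card_bij (fun yw _ => yw.1)
      · rintro ⟨y, w⟩ hyw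
        rw [Finset.mem_filter, hSSdef, Finset.mem_filter] at hyw
        obtain ⟨⟨-, hy, -⟩, hΦW⟩ := hyw
        have hmemW : ((y, w) : K × K) ∈ W := by
          rw [← hΦW]
          exact Submodule.subset_span (Set.mem_insert_of_mem _ rfl)
        exact Finset.mem_filter.2 ⟨Finset.mem_univ _, ⟨(y, w), hmemW, rfl⟩, hy⟩
      · rintro ⟨y1, w1⟩ h1 ⟨y2, w2⟩ h2 heq
        simp only at heq
        subst heq
        rw [Finset.mem_filter] at h1 h2
        have hm1 : ((y1, w1) : K × K) ∈ W := by
          rw [← h1.2]; exact Submodule.subset_span (Set.mem_insert_of_mem _ rfl)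
        have hm2 : ((y1, w2) : K × K) ∈ W := by
          rw [← h2.2]; exact Submodule.subset_span (Set.mem_insert_of_mem _ rfl)
        have hdiff : (((y1, w1) : K × K) - (y1, w2)) ∈ W := W.sub_mem hm1 hm2
        have := hWinj _ hdiff (by simp)
        rw [sub_eq_zero] at this
        exact this
      · intro y hy
        rw [Finset.mem_filter] at hy
        obtain ⟨-, hyU, hynr⟩ := hy
        obtain ⟨v, hvW, hv1⟩ := hyU
        refine ⟨(y, v.2), ?_, rfl⟩
        have hvyw : ((y, v.2) : K × K) ∈ W := by
          have hveq : v = (y, v.2) := Prod.ext hv1 rfl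
          rwa [hveq] at hvW
        have hS : (y, v.2) ∈ SS := by
          rw [hSSdef, Finset.mem_filter]
          exact ⟨Finset.mem_univ _, hynr,
            aux_keyB q t hqt hF hcardGal W hW11 hWall y v.2 hvyw hynr⟩
        rw [Finset.mem_filter]
        refine ⟨hS, ?_⟩
        show Submodule.span F {((1 : K), (1 : K)), ((y, v.2) : K × K)} = W
        have hle : Submodule.span F {((1 : K), (1 : K)), ((y, v.2) : K × K)} ≤ W := by
          apply Submodule.span_le.2
          rw [Set.insert_subset_iff]
          exact ⟨hW11, Set.singleton_subset_iff.2 hvyw⟩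
        exact Submodule.eq_of_le_of_finrank_eq hle
          (by rw [aux_finrank_span_pair hynr _, hW2])
    rw [hbij]
    have hsplit : Finset.univ.filter
          (fun y : K => y ∈ U ∧ y ∉ Set.range (algebraMap F K))
        = (Finset.univ.filter (fun y : K => y ∈ U))
            \ (Finset.univ.filter (fun y : K => y ∈ Set.range (algebraMap F K))) := by
      ext y
      simp only [Finset.mem_filter, Finset.mem_sdiff, Finset.mem_univ, true_and]
    have hsubset : (Finset.univ.filter (fun y : K => y ∈ Set.range (algebraMap F K)))
        ⊆ (Finset.univ.filter (fun y : K => y ∈ U)) := by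
      intro y hy
      rw [Finset.mem_filter] at hy ⊢
      obtain ⟨-, a, ha⟩ := hy
      exact ⟨Finset.mem_univ _, ha ▸ hrangesub a⟩
    have hcardA : (Finset.univ.filter (fun y : K => y ∈ U)).card = q ^ 2 := by
      have h := Fintype.card_subtype (p := fun y : K => y ∈ U)
      rw [← h, ← hUcard]
    have hcardB : (Finset.univ.filter
        (fun y : K => y ∈ Set.range (algebraMap F K))).card = q := by
      have himg : Finset.univ.filter (fun y : K => y ∈ Set.range (algebraMap F K))
          = Finset.univ.image (algebraMap F K) := by
        ext y
        simp [Set.mem_range, eq_comm]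
      rw [himg, Finset.card_image_of_injective _ (algebraMap F K).injective,
        Finset.card_univ, hF]
    rw [hsplit, Finset.card_sdiff_of_subset hsubset, hcardA, hcardB]
  -- C : SS.card equals the sum
  have hC : SS.card = ∑ y ∈ Finset.univ.filter (fun y : K => y ∉ Set.range (algebraMap F K)),
      Module.finrank F (Algebra.adjoin F ({y} : Set K)) := by
    rw [Finset.card_eq_sum_card_fiberwise (f := Prod.fst)
      (t := Finset.univ.filter (fun y : K => y ∉ Set.range (algebraMap F K)))
      (by
        rintro ⟨y, w⟩ h
        rw [Finset.mem_coe, hSSdef, Finset.mem_filter] at h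
        exact Finset.mem_coe.2 (Finset.mem_filter.2 ⟨Finset.mem_univ _, h.2.1⟩))]
    apply Finset.sum_congr rfl
    intro y hy
    rw [Finset.mem_filter] at hy
    rw [← aux_orbit_card y]
    apply Finset.card_bij (fun yw _ => yw.2)
    · rintro ⟨y', w⟩ h
      rw [Finset.mem_filter, hSSdef, Finset.mem_filter] at h
      obtain ⟨⟨-, -, σ, hσ⟩, hfst⟩ := h
      simp only at hfst
      subst hfst
      exact Finset.mem_image.2 ⟨σ, Finset.mem_univ _, hσ⟩
    · rintro ⟨y1, w1⟩ h1 ⟨y2, w2⟩ h2 heq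
      rw [Finset.mem_filter] at h1 h2
      simp only at heq
      have hy1 : y1 = y := h1.2
      have hy2 : y2 = y := h2.2
      exact Prod.ext (by rw [hy1, hy2]) heq
    · intro w hw
      obtain ⟨σ, -, hσ⟩ := Finset.mem_image.1 hw
      refine ⟨(y, w), ?_, rfl⟩
      rw [Finset.mem_filter, hSSdef, Finset.mem_filter]
      exact ⟨⟨Finset.mem_univ _, hy.2, σ, hσ⟩, rfl⟩
  -- put everything together
  have hsum : SS.card = Lfin.card * (q ^ 2 - q) := by
    rw [Finset.card_eq_sum_card_fiberwise hA]
    rw [Finset.sum_congr rfl hB, Finset.sum_const, smul_eq_mul]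
  have hncard : Set.ncard L = Lfin.card := by
    rw [hLfindef]
    exact Set.ncard_eq_toFinset_card _ hLfin
  rw [show Set.ncard {W : Submodule F (K × K) | Module.finrank F W = 2 ∧
        ((1 : K), (1 : K)) ∈ W ∧ ∀ v ∈ W, v ≠ 0 →
          v.1 ≠ 0 ∧ v.2 ≠ 0 ∧ Algebra.norm F v.1 = Algebra.norm F v.2} = Lfin.card
    from hncard]
  rw [← hC, hsum]
  have hqq : q * (q - 1) = q ^ 2 - q := by
    cases q with
    | zero => simp
    | succ n => simp [pow_two, Nat.mul_sub, Nat.succ_mul, Nat.mul_succ]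
  rw [hqq]
  have hpos : 0 < q ^ 2 - q := by
    have h1 : q ^ 1 < q ^ 2 := Nat.pow_lt_pow_right (by omega) (by omega)
    rw [pow_one] at h1
    omega
  rw [Nat.mul_div_cancel _ hpos]
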